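/- Let S, Ŝ be symmetric positive semidefinite matrices and λ > 0 with ‖(S+λI)^{-1/2}(Ŝ−S)(S+λI)^{-1/2}‖ ≤ ε < 1. Then for any symmetric matrix M, ‖(Ŝ+λI)^{-1/2} M (Ŝ+λI)^{-1/2}‖ ≤ (1−ε)^{-1}·‖(S+λI)^{-1/2} M (S+λI)^{-1/2}‖. -/

import Mathlib

open Matrix
open scoped Matrix.Norms.L2Operator

/-- The positive semidefinite square root of a matrix (junk value `0` if the
matrix is not positive semidefinite). -/
noncomputable def msqrt {d : ℕ} (M : Matrix (Fin d) (Fin d) ℝ) :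
    Matrix (Fin d) (Fin d) ℝ := by
  classical exact if h : M.PosSemidef then
    (h.1.eigenvectorUnitary : Matrix (Fin d) (Fin d) ℝ) *
      diagonal (Real.sqrt ∘ h.1.eigenvalues) *
      (star h.1.eigenvectorUnitary : Matrix (Fin d) (Fin d) ℝ) else 0

/-- The inverse square root `M^{-1/2}` of a positive semidefinite matrix. -/
noncomputable def minvSqrt {d : ℕ} (M : Matrix (Fin d) (Fin d) ℝ) :
    Matrix (Fin d) (Fin d) ℝ :=
  (msqrt M)⁻¹

/-- Loewner order: `A ⪯ B` iff `B - A` is positive semidefinite. -/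
def Loewner {d : ℕ} (A B : Matrix (Fin d) (Fin d) ℝ) : Prop :=
  (B - A).PosSemidef

lemma msqrt_facts {d : ℕ} {A : Matrix (Fin d) (Fin d) ℝ} (hA : A.PosDef) :
    msqrt A * msqrt A = A ∧ minvSqrt A * msqrt A = 1 ∧ msqrt A * minvSqrt A = 1 ∧
      (msqrt A)ᴴ = msqrt A ∧ (minvSqrt A)ᴴ = minvSqrt A := by
  have hps : A.PosSemidef := hA.posSemidef
  have h1 : msqrt A = (hps.1.eigenvectorUnitary : Matrix (Fin d) (Fin d) ℝ) *
      diagonal (Real.sqrt ∘ hps.1.eigenvalues) *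
      (star hps.1.eigenvectorUnitary : Matrix (Fin d) (Fin d) ℝ) := by rw [msqrt, dif_pos hps]
  have hmul : msqrt A * msqrt A = A := by
    rw [h1]
    have hU := Unitary.coe_star_mul_self hps.1.eigenvectorUnitary
    have hD : diagonal (Real.sqrt ∘ hps.1.eigenvalues) * diagonal (Real.sqrt ∘ hps.1.eigenvalues)
        = diagonal (RCLike.ofReal ∘ hps.1.eigenvalues) := by
      rw [diagonal_mul_diagonal]
      congr 1
      funext i
      simp only [Function.comp_apply, RCLike.ofReal_real_eq_id, id]
      exact Real.mul_self_sqrt (hps.eigenvalues_nonneg i)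
    conv_rhs => rw [hps.1.spectral_theorem, Unitary.conjStarAlgAut_apply, ← hD]
    simp only [Matrix.mul_assoc]
    rw [← Matrix.mul_assoc (star _) _ (diagonal _ * _), hU, Matrix.one_mul]
  have hherm : (msqrt A)ᴴ = msqrt A := by
    rw [h1]
    simp only [Matrix.star_eq_conjTranspose, Matrix.conjTranspose_mul, Matrix.conjTranspose_conjTranspose,
      Matrix.diagonal_conjTranspose, star_trivial, Matrix.mul_assoc]
  have hdet : IsUnit (msqrt A).det := by
    have h2 : (msqrt A).det * (msqrt A).det = A.det := by rw [← det_mul, hmul]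
    have := hA.det_pos
    refine isUnit_iff_ne_zero.2 fun h => ?_
    rw [h, zero_mul] at h2
    linarith [h2 ▸ this]
  refine ⟨hmul, nonsing_inv_mul _ hdet, mul_nonsing_inv _ hdet, hherm, ?_⟩
  exact Matrix.IsHermitian.inv hherm

lemma mul_one_cancel' {d : ℕ} {X Y : Matrix (Fin d) (Fin d) ℝ} (h : X * Y = 1)
    (Z : Matrix (Fin d) (Fin d) ℝ) : X * (Y * Z) = Z := by
  rw [← Matrix.mul_assoc, h, Matrix.one_mul]

/-- Change of decorrelation matrix under closeness: if
`‖(S+λI)^{-1/2}(Ŝ−S)(S+λI)^{-1/2}‖ ≤ ε < 1`, then for any symmetric `M`,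
`‖(Ŝ+λI)^{-1/2} M (Ŝ+λI)^{-1/2}‖ ≤ (1−ε)⁻¹ ‖(S+λI)^{-1/2} M (S+λI)^{-1/2}‖`. -/
theorem decorrelation_change_bound {d : ℕ}
    (S Shat M : Matrix (Fin d) (Fin d) ℝ) (l ε : ℝ)
    (hS : S.PosSemidef) (hShat : Shat.PosSemidef) (hM : M.IsHermitian)
    (hl : 0 < l) (hε0 : 0 ≤ ε) (hε1 : ε < 1)
    (herr : ‖minvSqrt (S + l • 1) * (Shat - S) * minvSqrt (S + l • 1)‖ ≤ ε) :
    ‖minvSqrt (Shat + l • 1) * M * minvSqrt (Shat + l • 1)‖ ≤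
      (1 - ε)⁻¹ * ‖minvSqrt (S + l • 1) * M * minvSqrt (S + l • 1)‖ := by
  have hεlt : (0:ℝ) < 1 - ε := by linarith
  set A := S + l • (1 : Matrix (Fin d) (Fin d) ℝ) with hAdef
  set B := Shat + l • (1 : Matrix (Fin d) (Fin d) ℝ) with hBdef
  have hl1 : (l • (1 : Matrix (Fin d) (Fin d) ℝ)).PosDef := by
    rw [smul_one_eq_diagonal]
    exact Matrix.PosDef.diagonal (fun _ => hl)
  have hA : A.PosDef := Matrix.PosDef.posSemidef_add hS hl1
  have hB : B.PosDef := Matrix.PosDef.posSemidef_add hShat hl1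
  obtain ⟨hsA, hRsA, hsRA, hsAH, hRAH⟩ := msqrt_facts hA
  obtain ⟨hsB, hRsB, hsRB, hsBH, hRBH⟩ := msqrt_facts hB
  set sA := msqrt A
  set RA := minvSqrt A
  set sB := msqrt B
  set RB := minvSqrt B
  have hBdet : IsUnit B.det := isUnit_iff_ne_zero.2 hB.det_pos.ne'
  have hBB : B * B⁻¹ = 1 := mul_nonsing_inv _ hBdet
  set E := RA * (Shat - S) * RA with hEdef
  set X := sA * B⁻¹ * sA with hXdef
  set T := RB * sA with hTdef
  set N := RA * M * RA with hNdef
  -- P = 1 + E where P = RA * B * RA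
  have hRAR : RA * A * RA = 1 := by
    rw [← hsA]
    calc RA * (sA * sA) * RA = (RA * sA) * (sA * RA) := by
          simp only [Matrix.mul_assoc]
      _ = 1 := by rw [hRsA, hsRA, Matrix.one_mul]
  have hBsplit : B = A + (Shat - S) := by
    rw [hAdef, hBdef]; abel
  have hP : RA * B * RA = 1 + E := by
    rw [hBsplit, Matrix.mul_add, Matrix.add_mul, hRAR, hEdef]
  -- (1 + E) * X = 1
  have hPX : (1 + E) * X = 1 := by
    rw [← hP, hXdef]
    calc RA * B * RA * (sA * B⁻¹ * sA) = RA * (B * (RA * (sA * (B⁻¹ * sA)))) := by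
          simp only [Matrix.mul_assoc]
      _ = RA * (B * (B⁻¹ * sA)) := by rw [mul_one_cancel' hRsA]
      _ = RA * sA := by rw [mul_one_cancel' hBB]
      _ = 1 := hRsA
  -- TᴴT = X
  have hBinv : RB * RB = B⁻¹ := by
    rw [show RB = sB⁻¹ from rfl, ← Matrix.mul_inv_rev, hsB]
  have hTT : Tᴴ * T = X := by
    rw [hTdef, conjTranspose_mul, hsAH, hRBH, hXdef]
    calc sA * RB * (RB * sA) = sA * (RB * RB) * sA := by simp only [Matrix.mul_assoc]
      _ = sA * B⁻¹ * sA := by rw [hBinv]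
  -- RB * M * RB = T * N * Tᴴ
  have hG : T * N * Tᴴ = RB * M * RB := by
    rw [hTdef, hNdef, conjTranspose_mul, hsAH, hRBH]
    calc RB * sA * (RA * M * RA) * (sA * RB)
        = RB * (sA * (RA * (M * (RA * (sA * RB))))) := by simp only [Matrix.mul_assoc]
      _ = RB * (sA * (RA * (M * RB))) := by rw [mul_one_cancel' hRsA]
      _ = RB * (M * RB) := by rw [mul_one_cancel' hsRA]
      _ = RB * M * RB := by rw [Matrix.mul_assoc]
  -- norm bound for X
  have hE : ‖E‖ ≤ ε := herr
  have hXnorm : ‖X‖ ≤ (1 - ε)⁻¹ := by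
    rw [Matrix.l2_opNorm_def]
    refine ContinuousLinearMap.opNorm_le_bound _ (by positivity) fun x => ?_
    show ‖(EuclideanSpace.equiv (Fin d) ℝ).symm (X *ᵥ x)‖ ≤ (1 - ε)⁻¹ * ‖x‖
    set y : EuclideanSpace ℝ (Fin d) := (EuclideanSpace.equiv (Fin d) ℝ).symm (X *ᵥ x) with hy
    set z : EuclideanSpace ℝ (Fin d) := (EuclideanSpace.equiv (Fin d) ℝ).symm (E *ᵥ y) with hz
    have hz_norm : ‖z‖ ≤ ε * ‖y‖ := by
      refine le_trans (Matrix.l2_opNorm_mulVec E y) ?_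
      exact mul_le_mul_of_nonneg_right hE (norm_nonneg _)
    have hxy : x = y + z := by
      have h1 : (1 + E) *ᵥ (X *ᵥ x) = x := by
        rw [mulVec_mulVec, hPX, one_mulVec]
      have h2 : (1 + E) *ᵥ (X *ᵥ x) = X *ᵥ x + E *ᵥ (X *ᵥ x) := by
        rw [add_mulVec, one_mulVec]
      calc x = (EuclideanSpace.equiv (Fin d) ℝ).symm ((1 + E) *ᵥ (X *ᵥ x)) := by rw [h1]; rfl
        _ = (EuclideanSpace.equiv (Fin d) ℝ).symm (X *ᵥ x + E *ᵥ (X *ᵥ x)) := by rw [h2]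
        _ = y + z := rfl
    have hyx : ‖y‖ ≤ ‖x‖ + ε * ‖y‖ := by
      calc ‖y‖ = ‖(y + z) - z‖ := by rw [add_sub_cancel_right]
        _ ≤ ‖y + z‖ + ‖z‖ := norm_sub_le _ _
        _ ≤ ‖x‖ + ε * ‖y‖ := by rw [← hxy]; exact add_le_add_right hz_norm _
    calc ‖y‖ = (1 - ε)⁻¹ * ((1 - ε) * ‖y‖) := by field_simp
      _ ≤ (1 - ε)⁻¹ * ‖x‖ := by
          apply mul_le_mul_of_nonneg_left _ (le_of_lt (inv_pos.2 hεlt))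
          nlinarith [norm_nonneg y]
  calc ‖RB * M * RB‖ = ‖T * N * Tᴴ‖ := by rw [← hG]
    _ ≤ ‖T * N‖ * ‖Tᴴ‖ := Matrix.l2_opNorm_mul _ _
    _ ≤ ‖T‖ * ‖N‖ * ‖Tᴴ‖ :=
        mul_le_mul_of_nonneg_right (Matrix.l2_opNorm_mul _ _) (norm_nonneg _)
    _ = ‖T‖ * ‖T‖ * ‖N‖ := by rw [Matrix.l2_opNorm_conjTranspose]; ring
    _ = ‖Tᴴ * T‖ * ‖N‖ := by rw [Matrix.l2_opNorm_conjTranspose_mul_self]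
    _ = ‖X‖ * ‖N‖ := by rw [hTT]
    _ ≤ (1 - ε)⁻¹ * ‖N‖ := mul_le_mul_of_nonneg_right hXnorm (norm_nonneg _)
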